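/- (Schwartz class filtration) Let c ≥ 1, f a dissipative function on a local field K (continuous, vanishing at infinity, valued in o_p), and χ a multiplicative character of modulus c such that fχ extends to a dissipative function on K. Then for every c' with 1 ≤ c' < c and every character χ' of modulus c', lim_{x→0} f(x)χ'(x) = 0. -/
import Mathlib


open Filter Topology

lemma char_ne_zero {K Cp : Type*} [Field K] [Field Cp] (χ : K → Cp)
    (hmul : ∀ x y : K, x ≠ 0 → y ≠ 0 → χ (x * y) = χ x * χ y) (h1 : χ 1 = 1)
    {x : K} (hx : x ≠ 0) : χ x ≠ 0 := by
  intro h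
  have := hmul x x⁻¹ hx (inv_ne_zero hx)
  rw [mul_inv_cancel₀ hx, h1, h, zero_mul] at this
  exact one_ne_zero this

lemma char_zpow {K Cp : Type*} [Field K] [Field Cp] (π : K) (hπ0 : π ≠ 0) (χ : K → Cp)
    (hmul : ∀ x y : K, x ≠ 0 → y ≠ 0 → χ (x * y) = χ x * χ y) (h1 : χ 1 = 1) :
    ∀ n : ℤ, χ (π ^ n) = (χ π) ^ n := by
  have hnat : ∀ n : ℕ, χ (π ^ n) = (χ π) ^ n := by
    intro n
    induction n with
    | zero => simpa using h1
    | succ k ih =>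
      rw [pow_succ, hmul _ _ (pow_ne_zero _ hπ0) hπ0, ih, pow_succ]
  intro n
  cases n with
  | ofNat m => simpa using hnat m
  | negSucc m =>
    have hne : π ^ (m + 1) ≠ 0 := pow_ne_zero _ hπ0
    have key : χ (π ^ Int.negSucc m) * χ (π ^ (m + 1)) = 1 := by
      rw [← hmul _ _ (zpow_ne_zero _ hπ0) hne]
      rw [show (π ^ Int.negSucc m) * π ^ (m + 1) = 1 by
        rw [zpow_negSucc]; exact inv_mul_cancel₀ hne]
      exact h1
    have hχπ : (χ π) ^ (m + 1) ≠ 0 :=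
      pow_ne_zero _ (char_ne_zero χ hmul h1 hπ0)
    rw [zpow_negSucc (χ π), ← hnat (m + 1)]
    exact eq_inv_of_mul_eq_one_left key

/-- Schwartz class filtration.  Let `c ≥ 1`, `f` a dissipative function on a local field
`K` (continuous, vanishing at infinity, valued in `o_p`), and `χ` a multiplicative
character of modulus `c` (i.e. `‖χ(π)‖ = c`, and `‖χ(u)‖ = 1` on units since `χ` has
finite image there) such that `fχ` extends to a dissipative function on `K`.  Then for
every `c'` with `1 ≤ c' < c` and every character `χ'` of modulus `c'`,
`lim_{x→0} f(x)χ'(x) = 0`. -/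
theorem schwartz_class_filtration
    (K : Type*) [NontriviallyNormedField K]
    (Cp : Type*) [NormedField Cp]
    (π : K) (hπ0 : π ≠ 0) (hπ1 : ‖π‖ < 1)
    (hval : ∀ x : K, x ≠ 0 → ∃ (n : ℤ) (u : K), ‖u‖ = 1 ∧ x = π ^ n * u)
    (c c' : ℝ) (hc : 1 ≤ c) (hc' : 1 ≤ c') (hcc : c' < c)
    (χ χ' : K → Cp)
    (hχmul : ∀ x y : K, x ≠ 0 → y ≠ 0 → χ (x * y) = χ x * χ y)
    (hχ'mul : ∀ x y : K, x ≠ 0 → y ≠ 0 → χ' (x * y) = χ' x * χ' y)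
    (hχ1 : χ 1 = 1) (hχ'1 : χ' 1 = 1)
    (hχunit : ∀ u : K, ‖u‖ = 1 → ‖χ u‖ = 1)
    (hχ'unit : ∀ u : K, ‖u‖ = 1 → ‖χ' u‖ = 1)
    (hχmod : ‖χ π‖ = c) (hχ'mod : ‖χ' π‖ = c')
    -- `f` is dissipative:
    (f : K → Cp) (hfc : Continuous f)
    (hfinf : Tendsto f (cocompact K) (𝓝 0))
    (hfb : ∀ x : K, ‖f x‖ ≤ 1)
    -- `fχ` extends to a dissipative function `g` on `K`:
    (g : K → Cp) (hgc : Continuous g)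
    (hginf : Tendsto g (cocompact K) (𝓝 0))
    (hgb : ∀ x : K, ‖g x‖ ≤ 1)
    (hgf : ∀ x : K, x ≠ 0 → g x = f x * χ x) :
    Tendsto (fun x => f x * χ' x) (𝓝[≠] (0 : K)) (𝓝 0) := by
  have hπpos : (0:ℝ) < ‖π‖ := norm_pos_iff.mpr hπ0
  have hcpos : (0:ℝ) < c := lt_of_lt_of_le one_pos hc
  have hc'pos : (0:ℝ) < c' := lt_of_lt_of_le one_pos hc'
  set ρ : ℝ := c' / c with hρdef
  have hρpos : 0 < ρ := div_pos hc'pos hcpos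
  have hρlt : ρ < 1 := (div_lt_one hcpos).mpr hcc
  -- norm estimate for x = π^n * u
  have hnorm : ∀ x : K, x ≠ 0 → ∀ n : ℤ, ∀ u : K, ‖u‖ = 1 → x = π ^ n * u →
      ‖f x * χ' x‖ ≤ ρ ^ n := by
    intro x hx n u hu hxe
    have hu0 : u ≠ 0 := by intro h; rw [h, norm_zero] at hu; exact one_ne_zero hu.symm
    have hπn : (π : K) ^ n ≠ 0 := zpow_ne_zero _ hπ0
    have hχx : ‖χ x‖ = c ^ n := by
      rw [hxe, hχmul _ _ hπn hu0, norm_mul, char_zpow π hπ0 χ hχmul hχ1, norm_zpow,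
        hχmod, hχunit u hu, mul_one]
    have hχ'x : ‖χ' x‖ = c' ^ n := by
      rw [hxe, hχ'mul _ _ hπn hu0, norm_mul, char_zpow π hπ0 χ' hχ'mul hχ'1, norm_zpow,
        hχ'mod, hχ'unit u hu, mul_one]
    have hχx0 : χ x ≠ 0 := char_ne_zero χ hχmul hχ1 hx
    have hfx : f x = g x / χ x := by
      rw [hgf x hx]; field_simp
    have : ‖f x * χ' x‖ = ‖g x‖ * c' ^ n / c ^ n := by
      rw [hfx, div_mul_eq_mul_div, norm_div, norm_mul, hχx, hχ'x]
    rw [this, hρdef, div_zpow]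
    apply div_le_div_of_nonneg_right _ (zpow_pos hcpos n).le
    calc ‖g x‖ * c' ^ n ≤ 1 * c' ^ n :=
          mul_le_mul_of_nonneg_right (hgb x) (le_of_lt (zpow_pos hc'pos n))
      _ = c' ^ n := one_mul _
  -- now the limit
  rw [NormedAddCommGroup.tendsto_nhds_zero]
  intro ε hε
  obtain ⟨N, hN⟩ : ∃ N : ℕ, ρ ^ N < ε := by
    obtain ⟨N, hN⟩ := exists_pow_lt_of_lt_one hε hρlt
    exact ⟨N, hN⟩
  have hball : ∀ᶠ x in 𝓝[≠] (0 : K), ‖x‖ < ‖π‖ ^ (N : ℤ) := by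
    have : {x : K | ‖x‖ < ‖π‖ ^ (N : ℤ)} ∈ 𝓝 (0 : K) := by
      apply Filter.mem_of_superset (Metric.ball_mem_nhds (0 : K) (zpow_pos hπpos (N : ℤ)))
      intro x hx
      simpa [dist_eq_norm] using hx
    exact eventually_nhdsWithin_of_eventually_nhds this
  filter_upwards [hball, self_mem_nhdsWithin] with x hx hx0
  have hx0' : x ≠ 0 := hx0
  obtain ⟨n, u, hu, hxe⟩ := hval x hx0'
  have hxn : ‖x‖ = ‖π‖ ^ n := by
    rw [hxe, norm_mul, norm_zpow, hu, mul_one]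
  have hNn : (N : ℤ) < n := by
    rw [hxn] at hx
    exact (zpow_lt_zpow_iff_right_of_lt_one₀ hπpos hπ1).mp hx
  calc ‖f x * χ' x‖ ≤ ρ ^ n := hnorm x hx0' n u hu hxe
    _ ≤ ρ ^ (N : ℤ) := zpow_le_zpow_right_of_le_one₀ hρpos (le_of_lt hρlt) (le_of_lt hNn)
    _ = ρ ^ N := zpow_natCast ρ N
    _ < ε := hN
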